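/- Specializing to λ=1, μ=1, δ=0 and η ∈ ℝ with |η−1| ≤ (1−t²)/(3t²): if a₂, a₃, c₂, d₂ ∈ ℂ satisfy |c₂| ≤ 1, |d₂| ≤ 1, (2(1−t²)/t²)a₂² = 2t(c₂+d₂), and a₃ = a₂² + (t/3)(c₂−d₂), then |a₃ − η a₂²| ≤ 2t/3. -/

import Mathlib

theorem stmt_17 (t eta : ℝ) (ht : 1 / 2 < t ∧ t < 1)
    (heta : |eta - 1| ≤ (1 - t ^ 2) / (3 * t ^ 2))
    (a2 a3 c2 d2 : ℂ) (hc2 : ‖c2‖ ≤ 1) (hd2 : ‖d2‖ ≤ 1)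
    (h1 : ((2 * (1 - t ^ 2) / t ^ 2 : ℝ) : ℂ) * a2 ^ 2 = ((2 * t : ℝ) : ℂ) * (c2 + d2))
    (h2 : a3 = a2 ^ 2 + ((t / 3 : ℝ) : ℂ) * (c2 - d2)) :
    ‖a3 - (eta : ℂ) * a2 ^ 2‖ ≤ 2 * t / 3 := by
  obtain ⟨ht1, ht2⟩ := ht
  have ht0 : (0:ℝ) < t := by linarith
  have h1t : (0:ℝ) < 1 - t ^ 2 := by nlinarith
  set A : ℝ := (1 - eta) * t ^ 3 / (1 - t ^ 2) with hA
  have hAbound : |A| ≤ t / 3 := by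
    rw [hA, abs_div, abs_mul]
    rw [abs_of_pos h1t, abs_of_pos (by positivity : (0:ℝ) < t ^ 3)]
    rw [div_le_iff₀ h1t]
    have h' : |1 - eta| ≤ (1 - t ^ 2) / (3 * t ^ 2) := by
      rwa [abs_sub_comm] at heta
    have := mul_le_mul_of_nonneg_right h' (by positivity : (0:ℝ) ≤ t ^ 3)
    calc |1 - eta| * t ^ 3 ≤ (1 - t ^ 2) / (3 * t ^ 2) * t ^ 3 := this
      _ = t / 3 * (1 - t ^ 2) := by field_simp
  -- express a2^2
  have ha2 : a2 ^ 2 = ((t ^ 3 / (1 - t ^ 2) : ℝ) : ℂ) * (c2 + d2) := by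
    have ht0' : (t:ℂ) ≠ 0 := by exact_mod_cast ht0.ne'
    have h1t' : ((1 - t ^ 2 : ℝ) : ℂ) ≠ 0 := by exact_mod_cast h1t.ne'
    have h1t'' : (1:ℂ) - (t:ℂ) ^ 2 ≠ 0 := by push_cast at h1t' ⊢; exact h1t'
    push_cast at h1 ⊢
    field_simp at h1 ⊢
    linear_combination h1
  have key : a3 - (eta : ℂ) * a2 ^ 2
      = ((A + t / 3 : ℝ) : ℂ) * c2 + ((A - t / 3 : ℝ) : ℂ) * d2 := by
    rw [h2, ha2]
    have h1t'' : (1:ℂ) - (t:ℂ) ^ 2 ≠ 0 := by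
      have : ((1 - t ^ 2 : ℝ) : ℂ) ≠ 0 := by exact_mod_cast h1t.ne'
      push_cast at this; exact this
    rw [hA]
    push_cast
    field_simp
    ring
  rw [key]
  calc ‖((A + t / 3 : ℝ) : ℂ) * c2 + ((A - t / 3 : ℝ) : ℂ) * d2‖
      ≤ ‖((A + t / 3 : ℝ) : ℂ) * c2‖ + ‖((A - t / 3 : ℝ) : ℂ) * d2‖ :=
        norm_add_le _ _
    _ ≤ |A + t / 3| * 1 + |A - t / 3| * 1 := by
        rw [norm_mul, norm_mul, Complex.norm_real, Complex.norm_real, Real.norm_eq_abs, Real.norm_eq_abs]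
        gcongr <;> positivity
    _ ≤ 2 * t / 3 := by
        rw [mul_one, mul_one]
        rcases abs_le.mp hAbound with ⟨hl, hr⟩
        rw [abs_of_nonneg (by linarith), abs_of_nonpos (by linarith)]; linarith
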